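/- Let X be a real random variable with probability density f(x) = K₀(|x|)/π, and define m(α, ν) := E[tanh(αX + ν)·X]. Then m(α, ν) is nonincreasing in ν ≥ 0 for each fixed α ≥ 0, nondecreasing in α ≥ 0 for each fixed ν ≥ 0, and satisfies 0 ≤ m(α, ν) ≤ m(α, 0) ≤ α for all α, ν ≥ 0. -/

import Mathlib

open Real MeasureTheory

open Set Filter

open scoped ENNReal

noncomputable def K0L (x : ℝ) : ℝ≥0∞ :=
  ∫⁻ t in Set.Ioi (0:ℝ), ENNReal.ofReal (Real.exp (-x * Real.cosh t))

lemma measurable_K0L : Measurable K0L := by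
  have h : Measurable (Function.uncurry fun x t : ℝ =>
      ENNReal.ofReal (Real.exp (-x * Real.cosh t))) := by
    apply ENNReal.measurable_ofReal.comp
    fun_prop
  exact h.lintegral_prod_right'

/-- Modified Bessel function of the second kind of order 0, via its integral
representation `K₀(x) = ∫₀^∞ exp(-x cosh t) dt`. -/
noncomputable def besselK0 (x : ℝ) : ℝ :=
  ∫ t in Set.Ioi (0 : ℝ), Real.exp (-x * Real.cosh t)

lemma besselK0_eq (x : ℝ) : besselK0 x = (K0L x).toReal := by
  rw [besselK0, integral_eq_lintegral_of_nonneg_ae]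
  · rfl
  · exact Filter.Eventually.of_forall fun t => (Real.exp_pos _).le
  · exact (Continuous.aestronglyMeasurable (by fun_prop))

lemma K0L_lt_top {x : ℝ} (hx : 0 < x) : K0L x < ⊤ := by
  have hb : ∀ t ∈ Ioi (0:ℝ), ENNReal.ofReal (Real.exp (-x * Real.cosh t)) ≤
      ENNReal.ofReal (Real.exp (-(x/2)) * Real.exp (-(x/2) * t)) := by
    intro t ht
    apply ENNReal.ofReal_le_ofReal
    rw [← Real.exp_add]
    apply Real.exp_le_exp.2
    have h1 : 1 + t ≤ Real.exp t := by linarith [Real.add_one_le_exp t]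
    have h2 : (1 + t) / 2 ≤ Real.cosh t := by
      rw [Real.cosh_eq]
      have := (Real.exp_pos (-t)).le
      linarith
    nlinarith
  calc K0L x ≤ ∫⁻ t in Ioi (0:ℝ), ENNReal.ofReal (Real.exp (-(x/2)) * Real.exp (-(x/2) * t)) :=
        setLIntegral_mono (by fun_prop) hb
    _ < ⊤ := by
        have : IntegrableOn (fun t => Real.exp (-(x/2)) * Real.exp (-(x/2) * t)) (Ioi 0) :=
          (exp_neg_integrableOn_Ioi 0 (by linarith)).const_mul _
        exact this.lintegral_lt_top

lemma hasDerivAt_tanh (x : ℝ) : HasDerivAt Real.tanh (1 / Real.cosh x ^ 2) x := by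
  have h : (Real.sinh / Real.cosh) = Real.tanh :=
    funext fun y => (Real.tanh_eq_sinh_div_cosh y).symm
  have := (Real.hasDerivAt_sinh x).div (Real.hasDerivAt_cosh x) (Real.cosh_pos x).ne'
  rw [h] at this
  refine this.congr_deriv ?_
  have := Real.cosh_sq_sub_sinh_sq x
  field_simp
  nlinarith

lemma tanh_monotone : Monotone Real.tanh := by
  apply monotone_of_deriv_nonneg
  · exact fun x => (hasDerivAt_tanh x).differentiableAt
  · intro x
    rw [(hasDerivAt_tanh x).deriv]
    positivity

lemma tanh_le_self {y : ℝ} (hy : 0 ≤ y) : Real.tanh y ≤ y := by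
  have hmono : Monotone fun y : ℝ => y - Real.tanh y := by
    apply monotone_of_deriv_nonneg
    · exact fun x => (differentiable_id.differentiableAt).sub
        (hasDerivAt_tanh x).differentiableAt
    · intro x
      have h : HasDerivAt (fun y : ℝ => y - Real.tanh y) (1 - 1 / Real.cosh x ^ 2) x :=
        (hasDerivAt_id x).sub (hasDerivAt_tanh x)
      rw [h.deriv]
      have h1 : 1 ≤ Real.cosh x := Real.one_le_cosh x
      have : 1 / Real.cosh x ^ 2 ≤ 1 := by
        rw [div_le_one (by positivity)]
        nlinarith
      linarith
  have := hmono hy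
  simp [Real.tanh_zero] at this
  linarith

lemma abs_tanh_le_one (y : ℝ) : |Real.tanh y| ≤ 1 := by
  rw [Real.tanh_eq_sinh_div_cosh, abs_div, abs_of_pos (Real.cosh_pos y),
    div_le_one (Real.cosh_pos y), Real.abs_sinh, ← Real.cosh_abs]
  exact (Real.sinh_lt_cosh _).le

lemma tanh_sub_tanh (u v : ℝ) :
    Real.tanh u - Real.tanh v = 2 * Real.sinh (u - v) / (Real.cosh (u + v) + Real.cosh (u - v)) := by
  have h1 : Real.cosh (u+v) + Real.cosh (u-v) = 2 * (Real.cosh u * Real.cosh v) := by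
    rw [Real.cosh_add, Real.cosh_sub]; ring
  rw [Real.tanh_eq_sinh_div_cosh, Real.tanh_eq_sinh_div_cosh, h1, Real.sinh_sub]
  have h2 := (Real.cosh_pos u).ne'
  have h3 := (Real.cosh_pos v).ne'
  field_simp

lemma hasDerivAt_arctan_sinh (t : ℝ) :
    HasDerivAt (fun s => Real.arctan (Real.sinh s)) (1 / Real.cosh t) t := by
  have h := (Real.hasDerivAt_arctan (Real.sinh t)).comp t (Real.hasDerivAt_sinh t)
  refine h.congr_deriv ?_
  have h2 := Real.cosh_sq' t
  have h3 := (Real.cosh_pos t).ne'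
  field_simp
  nlinarith

lemma tendsto_sinh_atTop : Tendsto Real.sinh atTop atTop := by
  apply tendsto_atTop_mono' _ _ tendsto_id
  filter_upwards [eventually_gt_atTop (0:ℝ)] with x hx
  exact (Real.self_lt_sinh_iff.2 hx).le

lemma tendsto_arctan_sinh :
    Tendsto (fun s => Real.arctan (Real.sinh s)) atTop (nhds (Real.pi / 2)) :=
  (Real.tendsto_arctan_atTop.mono_right nhdsWithin_le_nhds).comp tendsto_sinh_atTop

lemma sech_nonneg (t : ℝ) : 0 ≤ 1 / Real.cosh t := by positivity

lemma integral_sech : ∫ t in Ioi (0:ℝ), 1 / Real.cosh t = Real.pi / 2 := by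
  have h := integral_Ioi_of_hasDerivAt_of_nonneg' (a := 0)
    (g := fun s => Real.arctan (Real.sinh s)) (g' := fun t => 1 / Real.cosh t)
    (fun x _ => hasDerivAt_arctan_sinh x) (fun x _ => sech_nonneg x) tendsto_arctan_sinh
  simpa using h

lemma integrableOn_sech : IntegrableOn (fun t => 1 / Real.cosh t) (Ioi (0:ℝ)) :=
  integrableOn_Ioi_deriv_of_nonneg' (fun x _ => hasDerivAt_arctan_sinh x)
    (fun x _ => sech_nonneg x) tendsto_arctan_sinh

noncomputable def F3 (t : ℝ) : ℝ := (Real.sinh t / Real.cosh t ^ 2 + Real.arctan (Real.sinh t)) / 2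

lemma hasDerivAt_F3 (t : ℝ) : HasDerivAt F3 (1 / Real.cosh t ^ 3) t := by
  have hc := (Real.cosh_pos t).ne'
  have h1 : HasDerivAt (fun s => Real.sinh s / Real.cosh s ^ 2)
      ((Real.cosh t * Real.cosh t ^ 2 - Real.sinh t * (2 * Real.cosh t * Real.sinh t)) /
        (Real.cosh t ^ 2) ^ 2) t := by
    exact (Real.hasDerivAt_sinh t).div
      (((Real.hasDerivAt_cosh t).pow 2).congr_deriv (by ring)) (by positivity)
  have h2 := (h1.add (hasDerivAt_arctan_sinh t)).div_const 2
  refine h2.congr_deriv ?_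
  have h3 := Real.cosh_sq_sub_sinh_sq t
  field_simp [F3]
  linear_combination 2 * h3

lemma tendsto_F3 : Tendsto F3 atTop (nhds (Real.pi / 4)) := by
  have h1 : Tendsto (fun t => Real.sinh t / Real.cosh t ^ 2) atTop (nhds 0) := by
    apply squeeze_zero' (g := fun t => 1 / Real.cosh t)
    · filter_upwards [eventually_gt_atTop (0:ℝ)] with t ht
      positivity
    · filter_upwards [eventually_gt_atTop (0:ℝ)] with t ht
      rw [div_le_div_iff₀ (by positivity) (Real.cosh_pos t)]
      have := (Real.sinh_lt_cosh t).le
      nlinarith [Real.cosh_pos t, Real.sinh_pos_iff.2 ht]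
    · have hcosh : Tendsto Real.cosh atTop atTop :=
        tendsto_atTop_mono (fun x => (Real.sinh_lt_cosh x).le) tendsto_sinh_atTop
      simpa [one_div, Pi.inv_def] using hcosh.inv_tendsto_atTop
  have h2 := (h1.add tendsto_arctan_sinh).div_const 2
  have h3 : (0 + Real.pi / 2) / 2 = Real.pi / 4 := by ring
  rw [h3] at h2
  exact h2

lemma sech3_nonneg (t : ℝ) : 0 ≤ 1 / Real.cosh t ^ 3 := by positivity

lemma integral_sech3 : ∫ t in Ioi (0:ℝ), 1 / Real.cosh t ^ 3 = Real.pi / 4 := by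
  have h := integral_Ioi_of_hasDerivAt_of_nonneg' (a := 0)
    (fun x _ => hasDerivAt_F3 x) (fun x _ => sech3_nonneg x) tendsto_F3
  simpa [F3] using h

lemma integrableOn_sech3 : IntegrableOn (fun t => 1 / Real.cosh t ^ 3) (Ioi (0:ℝ)) :=
  integrableOn_Ioi_deriv_of_nonneg' (fun x _ => hasDerivAt_F3 x)
    (fun x _ => sech3_nonneg x) tendsto_F3

lemma integral_pow_exp (k : ℕ) {c : ℝ} (hc : 0 < c) :
    ∫ x in Ioi (0:ℝ), x ^ k * Real.exp (-(c * x)) = (Nat.factorial k : ℝ) / c ^ (k+1) := by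
  have h := integral_rpow_mul_exp_neg_mul_Ioi (a := (k:ℝ)+1) (by positivity) hc
  rw [show ((k:ℝ)+1-1) = (k:ℝ) by ring] at h
  rw [show ∫ x in Ioi (0:ℝ), x ^ k * Real.exp (-(c * x))
      = ∫ x in Ioi (0:ℝ), x ^ ((k:ℝ)) * Real.exp (-(c * x)) from
    setIntegral_congr_fun measurableSet_Ioi fun x hx => by
      rw [Real.rpow_natCast]]
  rw [h, Real.Gamma_nat_eq_factorial, show ((k:ℝ)+1) = ((k+1:ℕ):ℝ) by push_cast; ring,
    Real.rpow_natCast, one_div, inv_pow]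
  field_simp

lemma integrableOn_pow_exp (k : ℕ) {c : ℝ} (hc : 0 < c) :
    IntegrableOn (fun x => x ^ k * Real.exp (-(c * x))) (Ioi (0:ℝ)) := by
  have h := integrableOn_rpow_mul_exp_neg_mul_rpow (p := 1) (s := (k:ℝ)) (b := c)
    (lt_of_lt_of_le (by norm_num) (Nat.cast_nonneg k)) one_pos hc
  apply h.congr_fun _ measurableSet_Ioi
  intro x hx
  simp only [Real.rpow_natCast, Real.rpow_one, neg_mul]

lemma lint_pow_exp (k : ℕ) {c : ℝ} (hc : 0 < c) :
    ∫⁻ x in Ioi (0:ℝ), ENNReal.ofReal (x ^ k * Real.exp (-(c * x)))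
      = ENNReal.ofReal ((Nat.factorial k : ℝ) / c ^ (k+1)) := by
  rw [← ofReal_integral_eq_lintegral_ofReal (integrableOn_pow_exp k hc), integral_pow_exp k hc]
  filter_upwards [ae_restrict_mem measurableSet_Ioi] with x hx
  have : (0:ℝ) < x := hx
  positivity

lemma mom (k : ℕ) : ∫⁻ x in Ioi (0:ℝ), ENNReal.ofReal (x ^ k) * K0L x
    = ∫⁻ t in Ioi (0:ℝ), ENNReal.ofReal ((Nat.factorial k : ℝ) / Real.cosh t ^ (k+1)) := by
  have hmeas : Measurable (Function.uncurry fun x t : ℝ =>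
      ENNReal.ofReal (x ^ k * Real.exp (-x * Real.cosh t))) := by
    apply ENNReal.measurable_ofReal.comp; fun_prop
  calc ∫⁻ x in Ioi (0:ℝ), ENNReal.ofReal (x ^ k) * K0L x
      = ∫⁻ x in Ioi (0:ℝ), ∫⁻ t in Ioi (0:ℝ),
          ENNReal.ofReal (x ^ k * Real.exp (-x * Real.cosh t)) := by
        apply setLIntegral_congr_fun measurableSet_Ioi
        intro x hx
        dsimp only
        rw [K0L, ← lintegral_const_mul _ (by fun_prop)]
        congr 1; funext t
        rw [← ENNReal.ofReal_mul (pow_pos (mem_Ioi.1 hx) k).le]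
    _ = ∫⁻ t in Ioi (0:ℝ), ∫⁻ x in Ioi (0:ℝ),
          ENNReal.ofReal (x ^ k * Real.exp (-x * Real.cosh t)) := by
        apply lintegral_lintegral_swap
        exact hmeas.aemeasurable
    _ = ∫⁻ t in Ioi (0:ℝ), ENNReal.ofReal ((Nat.factorial k : ℝ) / Real.cosh t ^ (k+1)) := by
        apply setLIntegral_congr_fun measurableSet_Ioi
        intro t ht
        dsimp only
        have := lint_pow_exp k (Real.cosh_pos t)
        rw [← this]
        congr 1; funext x
        rw [show -x * Real.cosh t = -(Real.cosh t * x) by ring]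

lemma lint_K0L_Ioi : ∫⁻ x in Ioi (0:ℝ), K0L x = ENNReal.ofReal (Real.pi / 2) := by
  have h := mom 0
  simp only [pow_zero, ENNReal.ofReal_one, one_mul, Nat.factorial_zero, Nat.cast_one, pow_one,
    zero_add] at h
  rw [h, ← ofReal_integral_eq_lintegral_ofReal]
  · rw [show ∫ t in Ioi (0:ℝ), 1 / Real.cosh t = Real.pi/2 from integral_sech]
  · exact integrableOn_sech
  · filter_upwards with t
    positivity

lemma lint_sq_K0L : ∫⁻ x in Ioi (0:ℝ), ENNReal.ofReal (x ^ 2) * K0L x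
    = ENNReal.ofReal (Real.pi / 2) := by
  have h := mom 2
  rw [h, ← ofReal_integral_eq_lintegral_ofReal]
  · rw [show ∫ t in Ioi (0:ℝ), ((Nat.factorial 2 : ℝ)) / Real.cosh t ^ (2+1)
        = ∫ t in Ioi (0:ℝ), 2 * (1 / Real.cosh t ^ 3) from by
      congr 1; funext t; rw [show (Nat.factorial 2 : ℝ) = 2 by norm_num [Nat.factorial]]; ring]
    rw [integral_const_mul, integral_sech3]
    rw [show 2 * (Real.pi/4) = Real.pi/2 by ring]
  · have h2 : IntegrableOn (fun t => 2 * (1 / Real.cosh t ^ 3)) (Ioi (0:ℝ)) :=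
      integrableOn_sech3.const_mul 2
    apply h2.congr_fun _ measurableSet_Ioi
    intro t _
    rw [show (Nat.factorial 2 : ℝ) = 2 by norm_num [Nat.factorial]]
    ring
  · filter_upwards with t
    positivity

/-- The probability density `x ↦ K₀(|x|)/π` on ℝ. -/
noncomputable def besselDensity (x : ℝ) : ℝ := besselK0 |x| / Real.pi

lemma bD_eq (x : ℝ) : besselDensity x = (K0L |x|).toReal / Real.pi := by
  rw [besselDensity, besselK0_eq]

lemma bD_nonneg (x : ℝ) : 0 ≤ besselDensity x := by
  rw [bD_eq]; positivity

lemma bD_even (x : ℝ) : besselDensity (-x) = besselDensity x := by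
  rw [besselDensity, besselDensity, abs_neg]

lemma measurable_bD : Measurable besselDensity := by
  have : besselDensity = fun x => (K0L |x|).toReal / Real.pi :=
    funext fun x => bD_eq x
  rw [this]
  exact ((measurable_K0L.comp measurable_abs).ennreal_toReal).div_const _

lemma ofReal_bD {x : ℝ} (hx : 0 < x) {a : ℝ} (ha : 0 ≤ a) :
    ENNReal.ofReal (a * besselDensity x) =
      ENNReal.ofReal (a / Real.pi) * K0L x := by
  rw [bD_eq, abs_of_pos hx, show a * ((K0L x).toReal / Real.pi) = a / Real.pi * (K0L x).toReal
    by ring, ENNReal.ofReal_mul (by positivity), ENNReal.ofReal_toReal (K0L_lt_top hx).ne]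

lemma lint_majorant_Ioi :
    ∫⁻ x in Ioi (0:ℝ), ENNReal.ofReal ((1 + x^2) * besselDensity x) < ⊤ := by
  have hcong : ∫⁻ x in Ioi (0:ℝ), ENNReal.ofReal ((1 + x^2) * besselDensity x)
      = ∫⁻ x in Ioi (0:ℝ), ENNReal.ofReal ((1 + x^2) / Real.pi) * K0L x := by
    apply setLIntegral_congr_fun measurableSet_Ioi
    intro x hx
    exact ofReal_bD (mem_Ioi.1 hx) (by positivity)
  rw [hcong]
  have hb : ∀ x : ℝ, ENNReal.ofReal ((1 + x^2) / Real.pi) * K0L x ≤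
      (1 + ENNReal.ofReal (x^2)) * K0L x := by
    intro x
    apply mul_le_mul_left
    calc ENNReal.ofReal ((1 + x^2) / Real.pi) ≤ ENNReal.ofReal (1 + x^2) := by
          apply ENNReal.ofReal_le_ofReal
          rw [div_le_iff₀ Real.pi_pos]
          nlinarith [Real.pi_gt_three, sq_nonneg x]
      _ = 1 + ENNReal.ofReal (x^2) := by
          rw [ENNReal.ofReal_add (by norm_num) (sq_nonneg x), ENNReal.ofReal_one]
  calc ∫⁻ x in Ioi (0:ℝ), ENNReal.ofReal ((1 + x^2) / Real.pi) * K0L x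
      ≤ ∫⁻ x in Ioi (0:ℝ), (1 + ENNReal.ofReal (x^2)) * K0L x := lintegral_mono hb
    _ = (∫⁻ x in Ioi (0:ℝ), K0L x) + ∫⁻ x in Ioi (0:ℝ), ENNReal.ofReal (x^2) * K0L x := by
        simp_rw [add_mul, one_mul]
        rw [lintegral_add_left measurable_K0L]
    _ < ⊤ := by
        rw [lint_K0L_Ioi, lint_sq_K0L]
        exact ENNReal.add_lt_top.2 ⟨ENNReal.ofReal_lt_top, ENNReal.ofReal_lt_top⟩

lemma integrableOn_majorant_Ioi :
    IntegrableOn (fun x => (1 + x^2) * besselDensity x) (Ioi (0:ℝ)) := by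
  constructor
  · exact ((measurable_const.add (measurable_id.pow_const 2)).mul
      measurable_bD).aestronglyMeasurable
  · rw [hasFiniteIntegral_iff_ofReal]
    · exact lint_majorant_Ioi
    · filter_upwards with x
      have := bD_nonneg x
      positivity

lemma integrable_majorant :
    Integrable (fun x => (1 + x^2) * besselDensity x) := by
  have int_Iic : IntegrableOn (fun x => (1 + x^2) * besselDensity x) (Iic 0) := by
    rw [← Measure.map_neg_eq_self (volume : Measure ℝ)]
    have m : MeasurableEmbedding fun x : ℝ => -x := (Homeomorph.neg ℝ).measurableEmbedding
    rw [m.integrableOn_map_iff]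
    have : ((fun x => (1 + x^2) * besselDensity x) ∘ fun x : ℝ => -x)
        = fun x => (1 + x^2) * besselDensity x := by
      funext x; simp [Function.comp, bD_even]
    rw [this, neg_preimage, neg_Iic, neg_zero]
    exact Iff.mpr integrableOn_Ici_iff_integrableOn_Ioi integrableOn_majorant_Ioi
  have := int_Iic.union integrableOn_majorant_Ioi
  rwa [Iic_union_Ioi, integrableOn_univ] at this

lemma integrableOn_sq_bD :
    IntegrableOn (fun x => x^2 * besselDensity x) (Ioi (0:ℝ)) := by
  apply Integrable.mono' integrableOn_majorant_Ioi
    ((measurable_id.pow_const 2).mul measurable_bD).aestronglyMeasurable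
  filter_upwards with x
  have h1 := bD_nonneg x
  simp only [Pi.mul_apply, id]
  rw [Real.norm_eq_abs, abs_of_nonneg (mul_nonneg (sq_nonneg x) h1)]
  simpa using mul_le_mul_of_nonneg_right (show x^2 ≤ 1 + x^2 by linarith) h1

lemma integral_sq_bD_Ioi : ∫ x in Ioi (0:ℝ), x^2 * besselDensity x = 1/2 := by
  rw [integral_eq_lintegral_of_nonneg_ae]
  · have hcong : ∫⁻ x in Ioi (0:ℝ), ENNReal.ofReal (x^2 * besselDensity x)
        = ∫⁻ x in Ioi (0:ℝ), ENNReal.ofReal (x^2 / Real.pi) * K0L x := by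
      apply setLIntegral_congr_fun measurableSet_Ioi
      intro x hx
      exact ofReal_bD (mem_Ioi.1 hx) (sq_nonneg x)
    rw [hcong]
    have hcong2 : ∫⁻ x in Ioi (0:ℝ), ENNReal.ofReal (x^2 / Real.pi) * K0L x
        = ∫⁻ x in Ioi (0:ℝ), (ENNReal.ofReal (x^2) * K0L x) * ENNReal.ofReal (Real.pi)⁻¹ := by
      apply setLIntegral_congr_fun measurableSet_Ioi
      intro x hx
      dsimp only
      rw [div_eq_mul_inv, ENNReal.ofReal_mul (sq_nonneg x)]
      ring
    rw [hcong2, lintegral_mul_const _ (by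
      exact (measurable_id.pow_const 2).ennreal_ofReal.mul measurable_K0L), lint_sq_K0L]
    rw [← ENNReal.ofReal_mul (by positivity)]
    rw [ENNReal.toReal_ofReal (by positivity)]
    field_simp
  · filter_upwards with x
    have := bD_nonneg x
    positivity
  · exact ((measurable_id.pow_const 2).mul measurable_bD).aestronglyMeasurable

/-- The population EM expectation `m(α, ν) = E[tanh(αX + ν)·X]`. -/
noncomputable def mExp (α ν : ℝ) : ℝ :=
  ∫ x : ℝ, Real.tanh (α * x + ν) * x * besselDensity x

lemma continuous_tanh' : Continuous Real.tanh := by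
  have h : Real.tanh = fun x => Real.sinh x / Real.cosh x :=
    funext fun x => Real.tanh_eq_sinh_div_cosh x
  rw [h]
  exact Real.continuous_sinh.div Real.continuous_cosh fun x => (Real.cosh_pos x).ne'

lemma integrable_integrand (α ν : ℝ) :
    Integrable (fun x => Real.tanh (α * x + ν) * x * besselDensity x) := by
  apply Integrable.mono' integrable_majorant
  · exact (((continuous_tanh'.comp (by continuity)).mul continuous_id).measurable.mul
      measurable_bD).aestronglyMeasurable
  · filter_upwards with x
    have h1 := bD_nonneg x
    have h2 := abs_tanh_le_one (α * x + ν)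
    have h3 : |x| ≤ 1 + x^2 := by nlinarith [abs_nonneg x, sq_abs x]
    rw [Real.norm_eq_abs, abs_mul, abs_mul, abs_of_nonneg h1]
    calc |Real.tanh (α*x+ν)| * |x| * besselDensity x ≤ 1 * |x| * besselDensity x := by
          apply mul_le_mul_of_nonneg_right _ h1
          exact mul_le_mul_of_nonneg_right h2 (abs_nonneg x)
      _ ≤ (1 + x^2) * besselDensity x := by
          rw [one_mul]
          exact mul_le_mul_of_nonneg_right h3 h1

lemma integrableOn_sym (α ν : ℝ) :
    IntegrableOn (fun x => (Real.tanh (α*x+ν) - Real.tanh (ν - α*x)) * (x * besselDensity x))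
      (Ioi (0:ℝ)) := by
  have h1 := (integrable_integrand α ν).integrableOn (s := Ioi (0:ℝ))
  have h2 := (integrable_integrand (-α) ν).integrableOn (s := Ioi (0:ℝ))
  have h3 := h1.sub h2
  apply h3.congr
  filter_upwards with x
  simp only [Pi.sub_apply]
  rw [show -α * x + ν = ν - α * x by ring]
  ring

lemma mExp_eq (α ν : ℝ) : mExp α ν =
    ∫ x in Ioi (0:ℝ), (Real.tanh (α*x+ν) - Real.tanh (ν - α*x)) * (x * besselDensity x) := by
  set g := fun x => Real.tanh (α * x + ν) * x * besselDensity x with hg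
  have hgi := integrable_integrand α ν
  have hsplit : mExp α ν = (∫ x in Iic (0:ℝ), g x) + ∫ x in Ioi (0:ℝ), g x := by
    rw [mExp, ← integral_add_compl measurableSet_Iic hgi, compl_Iic]
  have hneg : (∫ x in Iic (0:ℝ), g x) = ∫ x in Ioi (0:ℝ), g (-x) := by
    rw [integral_comp_neg_Ioi, neg_zero]
  have hgneg : ∀ x : ℝ, g (-x) = -(Real.tanh (ν - α*x) * x * besselDensity x) := by
    intro x
    simp only [hg]
    rw [bD_even, show α * (-x) + ν = ν - α * x by ring]
    ring
  rw [hsplit, hneg]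
  rw [← integral_add]
  · apply setIntegral_congr_fun measurableSet_Ioi
    intro x _
    show g (-x) + g x = _
    rw [hgneg]
    simp only [hg]
    ring
  · apply ((integrable_integrand (-α) ν).integrableOn (s := Ioi (0:ℝ))).neg.congr
    filter_upwards with x
    show -(Real.tanh (-α * x + ν) * x * besselDensity x) = g (-x)
    rw [hgneg x, show -α * x + ν = ν - α * x by ring]
  · exact hgi.integrableOn

lemma mExp_anti (α : ℝ) (hα : 0 ≤ α) {ν ν' : ℝ} (hν : 0 ≤ ν) (hνν' : ν ≤ ν') :
    mExp α ν' ≤ mExp α ν := by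
  rw [mExp_eq, mExp_eq]
  apply setIntegral_mono_on (integrableOn_sym α ν') (integrableOn_sym α ν) measurableSet_Ioi
  intro x hx
  have hx0 : (0:ℝ) < x := hx
  apply mul_le_mul_of_nonneg_right _ (mul_nonneg hx0.le (bD_nonneg x))
  rw [tanh_sub_tanh, tanh_sub_tanh,
    show α*x+ν' + (ν'-α*x) = 2*ν' by ring, show α*x+ν' - (ν'-α*x) = 2*(α*x) by ring,
    show α*x+ν + (ν-α*x) = 2*ν by ring, show α*x+ν - (ν-α*x) = 2*(α*x) by ring]
  have hnum : 0 ≤ 2 * Real.sinh (2*(α*x)) := by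
    have : (0:ℝ) ≤ 2*(α*x) := by positivity
    linarith [Real.sinh_nonneg_iff.2 this]
  have hden : 0 < Real.cosh (2*ν) + Real.cosh (2*(α*x)) := by
    have := Real.cosh_pos (2*ν); have := Real.cosh_pos (2*(α*x)); linarith
  apply div_le_div_of_nonneg_left hnum hden
  have : Real.cosh (2*ν) ≤ Real.cosh (2*ν') := by
    apply Real.cosh_le_cosh.2
    rw [abs_of_nonneg (by linarith), abs_of_nonneg (by linarith)]
    linarith
  linarith

lemma mExp_mono (ν : ℝ) {α α' : ℝ} (hα : 0 ≤ α) (hαα' : α ≤ α') :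
    mExp α ν ≤ mExp α' ν := by
  rw [mExp_eq, mExp_eq]
  apply setIntegral_mono_on (integrableOn_sym α ν) (integrableOn_sym α' ν) measurableSet_Ioi
  intro x hx
  have hx0 : (0:ℝ) < x := hx
  apply mul_le_mul_of_nonneg_right _ (mul_nonneg hx0.le (bD_nonneg x))
  apply sub_le_sub
  · exact tanh_monotone (by nlinarith)
  · exact tanh_monotone (by nlinarith)

lemma mExp_nonneg (α ν : ℝ) (hα : 0 ≤ α) (hν : 0 ≤ ν) : 0 ≤ mExp α ν := by
  rw [mExp_eq]
  apply setIntegral_nonneg measurableSet_Ioi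
  intro x hx
  have hx0 : (0:ℝ) < x := hx
  apply mul_nonneg _ (mul_nonneg hx0.le (bD_nonneg x))
  rw [tanh_sub_tanh, show α*x+ν - (ν-α*x) = 2*(α*x) by ring]
  apply div_nonneg
  · have : (0:ℝ) ≤ 2*(α*x) := by positivity
    linarith [Real.sinh_nonneg_iff.2 this]
  · linarith [Real.cosh_pos (α*x+ν + (ν-α*x)), Real.cosh_pos (2*(α*x))]

lemma mExp_le (α : ℝ) (hα : 0 ≤ α) : mExp α 0 ≤ α := by
  rw [mExp_eq]
  have key : ∀ x ∈ Ioi (0:ℝ),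
      (Real.tanh (α*x+0) - Real.tanh (0 - α*x)) * (x * besselDensity x)
        ≤ 2*α * (x^2 * besselDensity x) := by
    intro x hx
    have hx0 : (0:ℝ) < x := hx
    rw [add_zero, zero_sub, Real.tanh_neg, sub_neg_eq_add]
    have h1 : Real.tanh (α*x) ≤ α*x := tanh_le_self (by positivity)
    have h2 : 0 ≤ x * besselDensity x := mul_nonneg hx0.le (bD_nonneg x)
    calc (Real.tanh (α*x) + Real.tanh (α*x)) * (x * besselDensity x)
        = 2 * Real.tanh (α*x) * (x * besselDensity x) := by ring
      _ ≤ 2 * (α*x) * (x * besselDensity x) := by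
          apply mul_le_mul_of_nonneg_right _ h2
          linarith
      _ = 2*α * (x^2 * besselDensity x) := by ring
  calc ∫ x in Ioi (0:ℝ), (Real.tanh (α*x+0) - Real.tanh (0 - α*x)) * (x * besselDensity x)
      ≤ ∫ x in Ioi (0:ℝ), 2*α * (x^2 * besselDensity x) :=
        setIntegral_mono_on (integrableOn_sym α 0) (integrableOn_sq_bD.const_mul _)
          measurableSet_Ioi key
    _ = 2*α * ∫ x in Ioi (0:ℝ), x^2 * besselDensity x := integral_const_mul _ _
    _ = α := by rw [integral_sq_bD_Ioi]; ring

theorem mExp_monotone :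
    (∀ α : ℝ, 0 ≤ α → ∀ ν ν' : ℝ, 0 ≤ ν → ν ≤ ν' → mExp α ν' ≤ mExp α ν) ∧
      (∀ ν : ℝ, 0 ≤ ν → ∀ α α' : ℝ, 0 ≤ α → α ≤ α' → mExp α ν ≤ mExp α' ν) ∧
      (∀ α ν : ℝ, 0 ≤ α → 0 ≤ ν →
        0 ≤ mExp α ν ∧ mExp α ν ≤ mExp α 0 ∧ mExp α 0 ≤ α) := by
  refine ⟨fun α hα ν ν' hν hνν' => mExp_anti α hα hν hνν',
    fun ν hν α α' hα hαα' => mExp_mono ν hα hαα',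
    fun α ν hα hν => ⟨mExp_nonneg α ν hα hν, mExp_anti α hα le_rfl hν, mExp_le α hα⟩⟩
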